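/- For any topological space X, the topology on K(A(X)) (the upper powerspace of the lower powerspace) is generated by the sets □◇U = {𝒦 ∈ K(A(X)) | every A ∈ 𝒦 meets U}, where U ranges over open subsets of X. -/

import Mathlib

open Set Topology

/-- The lower powerspace: closed subsets of `X`. -/
def LowerPS (X : Type*) [TopologicalSpace X] : Type _ := {A : Set X // IsClosed A}

/-- Lower Vietoris topology, generated by the sets `◇U = {A | A ∩ U ≠ ∅}` for `U` open. -/
instance (X : Type*) [TopologicalSpace X] : TopologicalSpace (LowerPS X) :=
  .generateFrom {S | ∃ U : Set X, IsOpen U ∧ S = {A : LowerPS X | (A.1 ∩ U).Nonempty}}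

/-- The upper powerspace: compact saturated subsets of `X`
(saturated = intersection of all open neighborhoods). -/
def UpperPS (X : Type*) [TopologicalSpace X] : Type _ :=
  {K : Set X // IsCompact K ∧ K = ⋂₀ {U : Set X | IsOpen U ∧ K ⊆ U}}

/-- Upper Vietoris topology, generated by the sets `□U = {K | K ⊆ U}` for `U` open. -/
instance (X : Type*) [TopologicalSpace X] : TopologicalSpace (UpperPS X) :=
  .generateFrom {S | ∃ U : Set X, IsOpen U ∧ S = {K : UpperPS X | K.1 ⊆ U}}

/-- A `Π⁰₂` subset. -/
def IsPi02 {Y : Type*} [TopologicalSpace Y] (S : Set Y) : Prop :=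
  ∃ U V : ℕ → Set Y, (∀ i, IsOpen (U i)) ∧ (∀ i, IsOpen (V i)) ∧
    ∀ y, y ∈ S ↔ ∀ i, y ∈ U i → y ∈ V i

/-- The Scott topology on `P(ω)`, generated by the sets `{x | F ⊆ x}` for finite `F`. -/
instance : TopologicalSpace (Set ℕ) :=
  .generateFrom {S | ∃ F : Finset ℕ, S = {x : Set ℕ | ↑F ⊆ x}}

/-- A space is quasi-Polish iff it is homeomorphic to a `Π⁰₂` subspace of `P(ω)`
with the Scott topology. -/
def QuasiPolish (X : Type*) [TopologicalSpace X] : Prop :=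
  ∃ S : Set (Set ℕ), IsPi02 S ∧ Nonempty (X ≃ₜ S)

/-- Scott-open subsets of a preorder. -/
def IsScottOpen {α : Type*} [Preorder α] (U : Set α) : Prop :=
  (∀ ⦃a b : α⦄, a ≤ b → a ∈ U → b ∈ U) ∧
  ∀ d : Set α, d.Nonempty → DirectedOn (· ≤ ·) d → ∀ a : α, IsLUB d a → a ∈ U →
    (d ∩ U).Nonempty

/-- The Scott topology on a preorder. -/
def scottTop (α : Type*) [Preorder α] : TopologicalSpace α := .generateFrom {U | IsScottOpen U}

/-- The frame of open subsets of `X`, ordered by inclusion. -/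
def OpensT (X : Type*) [TopologicalSpace X] : Type _ := {U : Set X // IsOpen U}

instance (X : Type*) [TopologicalSpace X] : PartialOrder (OpensT X) :=
  inferInstanceAs (PartialOrder {U : Set X // IsOpen U})

/-- `O(X)` carries the Scott topology. -/
instance (X : Type*) [TopologicalSpace X] : TopologicalSpace (OpensT X) := scottTop (OpensT X)

/-- `□◇U` in `K(A(X))`. -/
def boxDia {X : Type*} [TopologicalSpace X] (U : Set X) : Set (UpperPS (LowerPS X)) :=
  {𝒦 | ∀ A ∈ 𝒦.1, ((A : LowerPS X).1 ∩ U).Nonempty}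

/-- `◇□U` in `A(K(X))`. -/
def diaBox {X : Type*} [TopologicalSpace X] (U : Set X) : Set (LowerPS (UpperPS X)) :=
  {𝒜 | ∃ K ∈ 𝒜.1, (K : UpperPS X).1 ⊆ U}

/-- A space is consonant iff every Scott-open family of opens containing `U` contains
a compact-saturated filter neighborhood `▽K` of `U`. -/
def Consonant (X : Type*) [TopologicalSpace X] : Prop :=
  ∀ H : Set (OpensT X), IsScottOpen H → ∀ U ∈ H,
    ∃ K : UpperPS X, K.1 ⊆ U.1 ∧ ∀ V : OpensT X, K.1 ⊆ V.1 → V ∈ H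

/-- A space is co-consonant. -/
def CoConsonant (Y : Type*) [TopologicalSpace Y] : Prop :=
  ∀ H : Set (OpensT Y), IsScottOpen H → ∀ U ∈ H,
    ∃ F : Finset (Set Y), (∀ A ∈ F, IsClosed A) ∧ (∀ A ∈ F, (U.1 ∩ A).Nonempty) ∧
      ∀ V : OpensT Y, (∀ A ∈ F, (V.1 ∩ A).Nonempty) → V ∈ H


section AuxPS

open TopologicalSpace

variable {X : Type*} [TopologicalSpace X]

/-- The diamond `◇U` in `A(X)`. -/
def diaPS (U : Set X) : Set (LowerPS X) := {A : LowerPS X | (A.1 ∩ U).Nonempty}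

lemma isOpen_diaPS {U : Set X} (hU : IsOpen U) : IsOpen (diaPS U) :=
  isOpen_generateFrom_of_mem ⟨U, hU, rfl⟩

/-- A set of the form `⋂ V ∈ Vs, ◇V` for a finite family of opens `Vs`. -/
def IsDiaInter (S : Set (LowerPS X)) : Prop :=
  ∃ Vs : Set (Set X), Vs.Finite ∧ (∀ V ∈ Vs, IsOpen V) ∧ S = ⋂ V ∈ Vs, diaPS V

lemma isDiaInter_univ : IsDiaInter (univ : Set (LowerPS X)) :=
  ⟨∅, finite_empty, by simp, by simp⟩

lemma isDiaInter_empty : IsDiaInter (∅ : Set (LowerPS X)) :=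
  ⟨{∅}, finite_singleton _, by simp, by ext A; simp [diaPS]⟩

lemma isDiaInter_diaPS {U : Set X} (hU : IsOpen U) : IsDiaInter (diaPS U) :=
  ⟨{U}, finite_singleton _, by simpa, by simp⟩

lemma IsDiaInter.inter {S T : Set (LowerPS X)} (hS : IsDiaInter S) (hT : IsDiaInter T) :
    IsDiaInter (S ∩ T) := by
  obtain ⟨Vs, hVf, hVo, rfl⟩ := hS
  obtain ⟨Ws, hWf, hWo, rfl⟩ := hT
  refine ⟨Vs ∪ Ws, hVf.union hWf, ?_, ?_⟩
  · rintro V (h | h)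
    · exact hVo V h
    · exact hWo V h
  · rw [biInter_union]

lemma IsDiaInter.union {S T : Set (LowerPS X)} (hS : IsDiaInter S) (hT : IsDiaInter T) :
    IsDiaInter (S ∪ T) := by
  obtain ⟨Vs, hVf, hVo, rfl⟩ := hS
  obtain ⟨Ws, hWf, hWo, rfl⟩ := hT
  refine ⟨image2 (· ∪ ·) Vs Ws, hVf.image2 _ hWf, ?_, ?_⟩
  · rintro _ ⟨V, hV, W, hW, rfl⟩
    exact (hVo V hV).union (hWo W hW)
  · ext A
    simp only [mem_union, mem_iInter₂, diaPS, mem_setOf_eq, mem_image2]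
    constructor
    · rintro (h | h) Z ⟨V, hV, W, hW, rfl⟩
      · exact (h V hV).mono (inter_subset_inter_right _ subset_union_left)
      · exact (h W hW).mono (inter_subset_inter_right _ subset_union_right)
    · intro h
      by_cases hA : ∀ V ∈ Vs, (A.1 ∩ V).Nonempty
      · exact Or.inl hA
      · push_neg at hA
        obtain ⟨V₀, hV₀, hAe⟩ := hA
        refine Or.inr fun W hW => ?_
        obtain ⟨x, hx1, hx2⟩ := h _ ⟨V₀, hV₀, W, hW, rfl⟩
        rcases hx2 with h' | h'
        · exact absurd hAe (Set.nonempty_iff_ne_empty.1 ⟨x, hx1, h'⟩)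
        · exact ⟨x, hx1, h'⟩

lemma isDiaInter_biUnion {ι : Type*} {t : Set ι} (ht : t.Finite) {f : ι → Set (LowerPS X)}
    (hf : ∀ i ∈ t, IsDiaInter (f i)) : IsDiaInter (⋃ i ∈ t, f i) := by
  revert hf
  refine Set.Finite.induction_on (motive := fun t _ =>
    (∀ i ∈ t, IsDiaInter (f i)) → IsDiaInter (⋃ i ∈ t, f i)) t ht ?_ ?_
  · intro _; simpa using isDiaInter_empty
  · intro a s _ _ ih hf
    rw [biUnion_insert]
    exact (hf a (mem_insert _ _)).union (ih fun i hi => hf i (mem_insert_of_mem _ hi))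

lemma isDiaInter_sInter {f : Set (Set (LowerPS X))} (hff : f.Finite)
    (hfD : f ⊆ {S | ∃ U : Set X, IsOpen U ∧ S = {A : LowerPS X | (A.1 ∩ U).Nonempty}}) :
    IsDiaInter (⋂₀ f) := by
  revert hfD
  refine Set.Finite.induction_on (motive := fun f _ =>
    f ⊆ {S | ∃ U : Set X, IsOpen U ∧ S = {A : LowerPS X | (A.1 ∩ U).Nonempty}} →
      IsDiaInter (⋂₀ f)) f hff ?_ ?_
  · intro _; simpa using isDiaInter_univ
  · intro a s _ _ ih hfD
    rw [sInter_insert]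
    obtain ⟨U, hU, rfl⟩ := hfD (mem_insert _ _)
    exact (isDiaInter_diaPS hU).inter (ih fun i hi => hfD (mem_insert_of_mem _ hi))

lemma exists_diaInter {𝒰 : Set (LowerPS X)} (h𝒰 : IsOpen 𝒰) {K : Set (LowerPS X)}
    (hK : IsCompact K) (hsub : K ⊆ 𝒰) :
    ∃ S : Set (LowerPS X), IsDiaInter S ∧ K ⊆ S ∧ S ⊆ 𝒰 := by
  have hb := isTopologicalBasis_of_subbasis
    (rfl : (inferInstance : TopologicalSpace (LowerPS X)) = _)
  choose! B hB hmem hsubB using fun A (hA : A ∈ K) =>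
    hb.exists_subset_of_mem_open (hsub hA) h𝒰
  have hcov : K ⊆ ⋃ A ∈ K, B A := fun A hA => mem_biUnion hA (hmem A hA)
  have hopen : ∀ A ∈ K, IsOpen (B A) := fun A hA => hb.isOpen (hB A hA)
  obtain ⟨t, htK, htf, hcov'⟩ := hK.elim_finite_subcover_image hopen hcov
  refine ⟨⋃ A ∈ t, B A, ?_, hcov', ?_⟩
  · refine isDiaInter_biUnion htf fun A hA => ?_
    obtain ⟨f, ⟨hff, hfD⟩, hBA⟩ := hB A (htK hA)
    rw [← hBA]
    exact isDiaInter_sInter hff hfD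
  · exact iUnion₂_subset fun A hA => hsubB A (htK hA)

lemma generateOpen_biInter_finite {α : Type*} {g : Set (Set α)} {ι : Type*} {t : Set ι}
    (ht : t.Finite) {f : ι → Set α} (hf : ∀ i ∈ t, GenerateOpen g (f i)) :
    GenerateOpen g (⋂ i ∈ t, f i) := by
  revert hf
  refine Set.Finite.induction_on (motive := fun t _ =>
    (∀ i ∈ t, GenerateOpen g (f i)) → GenerateOpen g (⋂ i ∈ t, f i)) t ht ?_ ?_
  · intro _; simpa using GenerateOpen.univ
  · intro a s _ _ ih hf
    rw [biInter_insert]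
    exact GenerateOpen.inter _ _ (hf a (mem_insert _ _))
      (ih fun i hi => hf i (mem_insert_of_mem _ hi))

lemma generateOpen_box {𝒰 : Set (LowerPS X)} (h𝒰 : IsOpen 𝒰) :
    GenerateOpen {S | ∃ U : Set X, IsOpen U ∧ S = boxDia U}
      {K : UpperPS (LowerPS X) | K.1 ⊆ 𝒰} := by
  choose! S hSd hKS hS𝒰 using fun (K : UpperPS (LowerPS X)) (hK : K.1 ⊆ 𝒰) =>
    exists_diaInter h𝒰 K.2.1 hK
  choose! Vs hVf hVo hVeq using fun K hK => hSd K hK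
  have key : {K : UpperPS (LowerPS X) | K.1 ⊆ 𝒰} =
      ⋃ K ∈ {K : UpperPS (LowerPS X) | K.1 ⊆ 𝒰}, ⋂ V ∈ Vs K, boxDia V := by
    ext L
    constructor
    · intro hL
      refine mem_biUnion hL ?_
      refine mem_iInter₂.2 fun V hV => ?_
      intro A hA
      have : A ∈ ⋂ V ∈ Vs L, diaPS V := (hVeq L hL) ▸ hKS L hL hA
      exact mem_iInter₂.1 this V hV
    · intro hL
      obtain ⟨K, hK, hLK⟩ := mem_iUnion₂.1 hL
      have : L.1 ⊆ S K := by
        rw [hVeq K hK]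
        intro A hA
        exact mem_iInter₂.2 fun V hV => (mem_iInter₂.1 hLK V hV) A hA
      exact this.trans (hS𝒰 K hK)
  rw [key, ← sUnion_image]
  apply GenerateOpen.sUnion
  rintro _ ⟨K, hK, rfl⟩
  exact generateOpen_biInter_finite (hVf K hK) fun V hV =>
    GenerateOpen.basic _ ⟨V, hVo K hK V hV, rfl⟩

end AuxPS

/-- The upper Vietoris topology on `K(A(X))` is generated by the sets
`□◇U = {𝒦 | ∀ A ∈ 𝒦, A ∩ U ≠ ∅}` for `U` open in `X`. -/
theorem upperPS_lowerPS_topology_generated (X : Type*) [TopologicalSpace X] :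
    (inferInstance : TopologicalSpace (UpperPS (LowerPS X))) =
      .generateFrom {S | ∃ U : Set X, IsOpen U ∧ S = boxDia U} := by
  refine le_antisymm ?_ ?_
  · apply le_generateFrom
    rintro S ⟨U, hU, rfl⟩
    have h : boxDia U = {K : UpperPS (LowerPS X) | K.1 ⊆ diaPS U} := by
      ext K; exact Iff.rfl
    rw [h]
    exact TopologicalSpace.isOpen_generateFrom_of_mem ⟨diaPS U, isOpen_diaPS hU, rfl⟩
  · show TopologicalSpace.generateFrom _ ≤ TopologicalSpace.generateFrom _
    apply le_generateFrom
    rintro S ⟨𝒰, h𝒰, rfl⟩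
    exact generateOpen_box h𝒰
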